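/- There exists an integer n₀ such that for all integers n ≥ n₀ and 1 ≤ k ≤ n the following holds. Let U be a finite nonempty reverse-free set of words of length k over [n] whose overall matrix A_U has at least 5·n·√k 1-entries and has no light 1-entry. Let m = |A_U|/(n·√k), where |A_U| denotes the number of 1-entries of A_U. Then there exists a subset U' ⊆ U with |U'| ≥ |U|/n, with |A_{U'}| ≤ |A_U| − 2·n·m³/(5·√k), and with z_{U'} ≥ z_U + 1. -/

import Mathlib

/-- Two words have a reverse if they agree crosswise on a pair of positions
with distinct letters. -/
def HasReverse {k n : ℕ} (w x : Fin k → Fin n) : Prop :=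
  ∃ i j : Fin k, w i ≠ w j ∧ w i = x j ∧ w j = x i

/-- A set of words is reverse-free if no two distinct words in it have a reverse. -/
def ReverseFree {k n : ℕ} (S : Set (Fin k → Fin n)) : Prop :=
  ∀ w ∈ S, ∀ x ∈ S, w ≠ x → ¬ HasReverse w x

/-- The number of 1-entries of the overall matrix `A_U` of a finite set `U` of words:
position `(i, a)` is a 1-entry iff some word `w ∈ U` has `w i = a`. -/
def overallCard {k n : ℕ} (U : Finset (Fin k → Fin n)) : ℕ :=
  (Finset.univ.filter (fun p : Fin k × Fin n => ∃ w ∈ U, w p.1 = p.2)).card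

/-- The emptiness `z_U`: the number of rows of the overall matrix `A_U`
containing at most one 1-entry. -/
def emptiness {k n : ℕ} (U : Finset (Fin k → Fin n)) : ℕ :=
  (Finset.univ.filter (fun i : Fin k =>
    (Finset.univ.filter (fun a : Fin n => ∃ w ∈ U, w i = a)).card ≤ 1)).card

open Finset

namespace Stmt9Aux

variable {k n : ℕ}

/-- Row `i` of the overall matrix, as the set of letters occurring at position `i`. -/
def Row (U : Finset (Fin k → Fin n)) (i : Fin k) : Finset (Fin n) :=
  Finset.univ.filter (fun a => ∃ w ∈ U, w i = a)

lemma overallCard_eq_sum (U : Finset (Fin k → Fin n)) :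
    overallCard U = ∑ i, (Row U i).card := by
  rw [overallCard, card_filter, Fintype.sum_prod_type]
  exact Finset.sum_congr rfl fun i _ => by rw [Row, card_filter]

lemma Row_mono {U V : Finset (Fin k → Fin n)} (h : U ⊆ V) (i : Fin k) :
    Row U i ⊆ Row V i := by
  intro a ha
  simp only [Row, mem_filter, mem_univ, true_and] at *
  obtain ⟨w, hw, e⟩ := ha
  exact ⟨w, h hw, e⟩

lemma offDiag_eq (s : Finset (Fin n)) :
    s.offDiag = (Finset.univ : Finset (Fin n)).offDiag.filter
      (fun p => p.1 ∈ s ∧ p.2 ∈ s) := by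
  ext p
  simp [Finset.mem_offDiag]
  tauto

lemma triple (D : Finset (Fin n × Fin n)) (F : Fin k → (Fin n × Fin n) → ℕ) :
    (∑ r : Fin k, ∑ i : Fin k, ∑ p ∈ D, F r p * F i p)
      = ∑ p ∈ D, (∑ r : Fin k, F r p) ^ 2 := by
  have h : ∀ r : Fin k, (∑ i : Fin k, ∑ p ∈ D, F r p * F i p)
      = ∑ p ∈ D, F r p * (∑ i : Fin k, F i p) := by
    intro r
    rw [Finset.sum_comm]
    exact Finset.sum_congr rfl fun p _ => (Finset.mul_sum _ _ _).symm
  simp_rw [h]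
  rw [Finset.sum_comm]
  exact Finset.sum_congr rfl fun p _ => by rw [← Finset.sum_mul, sq]

lemma identity1 (U : Finset (Fin k → Fin n)) :
    (∑ r : Fin k, ∑ i : Fin k, ((Row U r ∩ Row U i).offDiag).card)
      = ∑ p ∈ (Finset.univ : Finset (Fin n)).offDiag,
          ((Finset.univ.filter (fun i : Fin k => p.1 ∈ Row U i ∧ p.2 ∈ Row U i)).card) ^ 2 := by
  have h1 : ∀ r i : Fin k, ((Row U r ∩ Row U i).offDiag).card
      = ∑ p ∈ (Finset.univ : Finset (Fin n)).offDiag,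
          (if p.1 ∈ Row U r ∧ p.2 ∈ Row U r then 1 else 0)
            * (if p.1 ∈ Row U i ∧ p.2 ∈ Row U i then 1 else 0) := by
    intro r i
    rw [offDiag_eq, card_filter]
    refine Finset.sum_congr rfl fun p _ => ?_
    by_cases h1 : p.1 ∈ Row U r ∧ p.2 ∈ Row U r <;>
      by_cases h2 : p.1 ∈ Row U i ∧ p.2 ∈ Row U i <;>
      simp [mem_inter, h1, h2] <;> tauto
  simp_rw [h1]
  rw [triple]
  exact Finset.sum_congr rfl fun p _ => by rw [card_filter]

lemma identity2 (U : Finset (Fin k → Fin n)) :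
    (∑ r : Fin k, ((Row U r).offDiag).card)
      = ∑ p ∈ (Finset.univ : Finset (Fin n)).offDiag,
          ((Finset.univ.filter (fun i : Fin k => p.1 ∈ Row U i ∧ p.2 ∈ Row U i)).card) := by
  have h1 : ∀ r : Fin k, ((Row U r).offDiag).card
      = ∑ p ∈ (Finset.univ : Finset (Fin n)).offDiag,
          (if p.1 ∈ Row U r ∧ p.2 ∈ Row U r then 1 else 0) := by
    intro r; rw [offDiag_eq, card_filter]
  simp_rw [h1]
  rw [Finset.sum_comm]
  exact Finset.sum_congr rfl fun p _ => by rw [card_filter]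

set_option maxHeartbeats 1000000 in
lemma savings {U : Finset (Fin k → Fin n)} (hRF : ReverseFree (U : Set (Fin k → Fin n)))
    (r i : Fin k) :
    2 * (∑ c ∈ Row U r, (Row (U.filter fun w => w r = c) i).card)
      + ((Row U r ∩ Row U i).offDiag).card
      ≤ 2 * (Row U r).card * (Row U i).card := by
  classical
  set S := Row U r with hS
  set V := Row U i with hV
  set T := S ∩ V with hT
  set W : Fin n → Finset (Fin n) := fun c => Row (U.filter fun w => w r = c) i with hW
  have hWV : ∀ c, W c ⊆ V := fun c => Row_mono (filter_subset _ _) i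
  have hTS : T ⊆ S := inter_subset_left
  have hTV : T ⊆ V := inter_subset_right
  have hanti : ∀ c a : Fin n, c ≠ a → a ∈ W c → c ∈ W a → False := by
    intro c a hca h1 h2
    simp only [hW, Row, mem_filter, mem_univ, true_and] at h1 h2
    obtain ⟨w, ⟨hwU, hwr⟩, hwi⟩ := h1
    obtain ⟨x, ⟨hxU, hxr⟩, hxi⟩ := h2
    have hwx : w ≠ x := by
      intro h; rw [h, hxr] at hwr; exact hca hwr.symm
    exact hRF w hwU x hxU hwx
      ⟨r, i, by rw [hwr, hwi]; exact hca, by rw [hwr, hxi], by rw [hwi, hxr]⟩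
  have step1 : ∀ c ∈ S, (W c).card + (T.erase c).card ≤ (W c ∩ T.erase c).card + V.card := by
    intro c _
    have hD : T.erase c ⊆ V := (erase_subset _ _).trans hTV
    have h1 : (W c ∩ T.erase c).card + (W c \ T.erase c).card = (W c).card :=
      card_inter_add_card_sdiff _ _
    have h2 : (W c \ T.erase c).card ≤ (V \ T.erase c).card :=
      card_le_card (sdiff_subset_sdiff (hWV c) (Finset.Subset.refl _))
    have h3 : (V \ T.erase c).card + (T.erase c).card = V.card :=
      card_sdiff_add_card_eq_card hD
    omega
  have hsum1 : (∑ c ∈ S, (W c).card) + (∑ c ∈ S, (T.erase c).card)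
      ≤ (∑ c ∈ S, (W c ∩ T.erase c).card) + S.card * V.card := by
    have := Finset.sum_le_sum step1
    rw [Finset.sum_add_distrib, Finset.sum_add_distrib, Finset.sum_const,
      smul_eq_mul] at this
    exact this
  have f4 : (∑ c ∈ S, (T.erase c).card) + T.card = S.card * T.card := by
    have h : ∀ c ∈ S, (T.erase c).card + (if c ∈ T then 1 else 0) = T.card := by
      intro c _
      by_cases hc : c ∈ T
      · simp only [hc, if_true]; exact card_erase_add_one hc
      · simp [hc, Finset.erase_eq_of_notMem hc]
    have h2 := Finset.sum_congr rfl h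
    rw [Finset.sum_add_distrib, Finset.sum_const, smul_eq_mul] at h2
    have hit : (∑ c ∈ S, if c ∈ T then 1 else 0) = T.card := by
      rw [← card_filter]
      congr 1
      ext x
      simp only [mem_filter]
      exact ⟨fun h => h.2, fun h => ⟨hTS h, h⟩⟩
    omega
  have hsplitS : ∀ g : Fin n → ℕ, (∑ c ∈ S, g c) = (∑ c ∈ T, g c) + ∑ c ∈ S \ T, g c := by
    intro g
    rw [← Finset.sum_inter_add_sum_sdiff S T g, Finset.inter_eq_right.mpr hTS]
  have f5a : (∑ c ∈ S \ T, (W c ∩ T.erase c).card) ≤ (S \ T).card * T.card := by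
    calc (∑ c ∈ S \ T, (W c ∩ T.erase c).card) ≤ ∑ _c ∈ S \ T, T.card := by
          refine Finset.sum_le_sum fun c _ => ?_
          exact (card_le_card inter_subset_right).trans (card_le_card (erase_subset _ _))
      _ = (S \ T).card * T.card := by rw [Finset.sum_const, smul_eq_mul]
  have f5b : 2 * (∑ c ∈ T, (W c ∩ T.erase c).card) ≤ T.offDiag.card := by
    have hoff : T.offDiag = (T ×ˢ T).filter (fun p => p.1 ≠ p.2) := by
      ext p; simp [Finset.mem_offDiag, Finset.mem_product]; tauto
    set P := T.offDiag.filter (fun p : Fin n × Fin n => p.2 ∈ W p.1) with hP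
    have hcard : (∑ c ∈ T, (W c ∩ T.erase c).card) = P.card := by
      have h1 : ∀ c ∈ T, (W c ∩ T.erase c).card
          = ∑ a ∈ T, (if a ≠ c ∧ a ∈ W c then 1 else 0) := by
        intro c _
        rw [← card_filter]
        congr 1
        ext a
        simp only [mem_inter, mem_filter, mem_erase]
        tauto
      rw [Finset.sum_congr rfl h1, hP, hoff, Finset.filter_filter, card_filter,
        Finset.sum_product]
      refine Finset.sum_congr rfl fun c _ => Finset.sum_congr rfl fun a _ => ?_
      refine if_congr ?_ rfl rfl
      constructor
      · rintro ⟨h1, h2⟩; exact ⟨Ne.symm h1, h2⟩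
      · rintro ⟨h1, h2⟩; exact ⟨Ne.symm h1, h2⟩
    have hswap : P.card ≤ (T.offDiag.filter (fun p : Fin n × Fin n => ¬ p.2 ∈ W p.1)).card := by
      apply Finset.card_le_card_of_injOn (fun p => (p.2, p.1))
      · intro p hp
        simp only [hP, Finset.mem_coe, mem_filter, Finset.mem_offDiag] at hp ⊢
        obtain ⟨⟨h1, h2, h3⟩, h4⟩ := hp
        exact ⟨⟨h2, h1, Ne.symm h3⟩, fun hc => hanti p.2 p.1 (Ne.symm h3) hc h4⟩
      · intro p _ q _ h
        simpa [Prod.ext_iff, and_comm] using h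
    have hsplit : P.card + (T.offDiag.filter (fun p : Fin n × Fin n => ¬ p.2 ∈ W p.1)).card
        = T.offDiag.card := Finset.card_filter_add_card_filter_not
      (s := T.offDiag) (p := fun p : Fin n × Fin n => p.2 ∈ W p.1)
    omega
  have hs : (S \ T).card + T.card = S.card := by
    have := card_le_card hTS
    rw [card_sdiff_of_subset hTS]; omega
  have ho : T.offDiag.card + T.card = T.card * T.card := by
    have h1 : T.offDiag.card = T.card * T.card - T.card := by rw [Finset.offDiag_card]
    have h2 : T.card ≤ T.card * T.card := by
      rcases Nat.eq_zero_or_pos T.card with h | h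
      · simp [h]
      · calc T.card = T.card * 1 := (mul_one _).symm
          _ ≤ T.card * T.card := Nat.mul_le_mul_left _ h
    omega
  have key := hsplitS (fun c => (W c ∩ T.erase c).card)
  have hst : S.card * T.card = (S \ T).card * T.card + T.card * T.card := by
    rw [← hs]; ring
  linarith [hsum1, f4, f5a, f5b, key, ho, hst]

lemma total {U : Finset (Fin k → Fin n)} (hRF : ReverseFree (U : Set (Fin k → Fin n)))
    (r : Fin k) :
    2 * (∑ c ∈ Row U r, overallCard (U.filter fun w => w r = c))
      + (∑ i : Fin k, ((Row U r ∩ Row U i).offDiag).card)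
      ≤ 2 * (Row U r).card * overallCard U := by
  have h1 : ∀ c, overallCard (U.filter fun w => w r = c)
      = ∑ i, (Row (U.filter fun w => w r = c) i).card := fun c => overallCard_eq_sum _
  simp_rw [h1, overallCard_eq_sum U]
  rw [Finset.sum_comm (s := Row U r)]
  calc 2 * (∑ i : Fin k, ∑ c ∈ Row U r, (Row (U.filter fun w => w r = c) i).card)
        + (∑ i : Fin k, ((Row U r ∩ Row U i).offDiag).card)
      = ∑ i : Fin k, (2 * (∑ c ∈ Row U r, (Row (U.filter fun w => w r = c) i).card)
          + ((Row U r ∩ Row U i).offDiag).card) := by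
        rw [Finset.mul_sum, Finset.sum_add_distrib]
    _ ≤ ∑ i : Fin k, 2 * (Row U r).card * (Row U i).card :=
        Finset.sum_le_sum fun i _ => savings hRF r i
    _ = 2 * (Row U r).card * ∑ i : Fin k, (Row U i).card := by rw [Finset.mul_sum]

lemma emptiness_succ (U : Finset (Fin k → Fin n)) (r : Fin k) (c : Fin n)
    (hs : 2 ≤ (Row U r).card) :
    emptiness U + 1 ≤ emptiness (U.filter fun w => w r = c) := by
  classical
  have hemp : ∀ V : Finset (Fin k → Fin n),
      emptiness V = (Finset.univ.filter (fun i : Fin k => (Row V i).card ≤ 1)).card :=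
    fun V => rfl
  rw [hemp, hemp]
  have hsub : (Finset.univ.filter (fun i : Fin k => (Row U i).card ≤ 1))
      ⊂ (Finset.univ.filter (fun i : Fin k =>
          (Row (U.filter fun w => w r = c) i).card ≤ 1)) := by
    constructor
    · intro i hi
      simp only [mem_filter, mem_univ, true_and] at hi ⊢
      exact le_trans (card_le_card (Row_mono (filter_subset _ _) i)) hi
    · intro hcon
      have hr : r ∈ (Finset.univ.filter (fun i : Fin k =>
          (Row (U.filter fun w => w r = c) i).card ≤ 1)) := by
        simp only [mem_filter, mem_univ, true_and]
        have : Row (U.filter fun w => w r = c) r ⊆ {c} := by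
          intro a ha
          simp only [Row, mem_filter, mem_univ, true_and] at ha
          obtain ⟨w, ⟨_, hwr⟩, hwa⟩ := ha
          simp [← hwa, hwr]
        calc (Row (U.filter fun w => w r = c) r).card ≤ ({c} : Finset (Fin n)).card :=
              card_le_card this
          _ = 1 := card_singleton c
      have := hcon hr
      simp only [mem_filter, mem_univ, true_and] at this
      omega
  exact card_lt_card hsub


lemma key_ineq (U : Finset (Fin k → Fin n)) (hknat : 1 ≤ k)
    (hX : 0 ≤ ((overallCard U : ℝ))^2 / k - (overallCard U : ℝ)) :
    (((overallCard U : ℝ))^2 / k - (overallCard U : ℝ))^2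
      ≤ (n:ℝ)^2 * ((∑ r : Fin k, ∑ i : Fin k, ((Row U r ∩ Row U i).offDiag).card : ℕ) : ℝ) := by
  classical
  have hk : (0:ℝ) < k := by exact_mod_cast hknat
  have hA_eq : (∑ r : Fin k, ((Row U r).card : ℝ)) = ((overallCard U : ℝ)) := by
    rw [overallCard_eq_sum U, Nat.cast_sum]
  have hid1R : ((∑ r : Fin k, ∑ i : Fin k, ((Row U r ∩ Row U i).offDiag).card : ℕ) : ℝ)
      = ∑ p ∈ (Finset.univ : Finset (Fin n)).offDiag,
          (((Finset.univ.filter (fun i : Fin k => p.1 ∈ Row U i ∧ p.2 ∈ Row U i)).card : ℝ)) ^ 2 := by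
    rw [identity1 U, Nat.cast_sum]
    exact Finset.sum_congr rfl fun p _ => by push_cast; ring
  have hid2R : (∑ p ∈ (Finset.univ : Finset (Fin n)).offDiag,
        (((Finset.univ.filter (fun i : Fin k => p.1 ∈ Row U i ∧ p.2 ∈ Row U i)).card : ℝ)))
      = ∑ r : Fin k, (((Row U r).offDiag).card : ℝ) := by
    rw [← Nat.cast_sum, ← identity2 U, Nat.cast_sum]
  have hCS : (∑ p ∈ (Finset.univ : Finset (Fin n)).offDiag,
        (((Finset.univ.filter (fun i : Fin k => p.1 ∈ Row U i ∧ p.2 ∈ Row U i)).card : ℝ))) ^ 2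
      ≤ (((Finset.univ : Finset (Fin n)).offDiag.card : ℝ)) *
        ∑ p ∈ (Finset.univ : Finset (Fin n)).offDiag,
          (((Finset.univ.filter (fun i : Fin k => p.1 ∈ Row U i ∧ p.2 ∈ Row U i)).card : ℝ)) ^ 2 :=
    sq_sum_le_card_mul_sum_sq
  have hoffcard : (((Finset.univ : Finset (Fin n)).offDiag.card : ℕ) : ℝ) ≤ (n:ℝ) ^ 2 := by
    rw [Finset.offDiag_card]
    have h0 : ((Finset.univ : Finset (Fin n)).card) = n := by simp
    rw [h0]
    have h1 : n * n - n ≤ n * n := Nat.sub_le _ _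
    calc ((n * n - n : ℕ) : ℝ) ≤ ((n * n : ℕ) : ℝ) := by exact_mod_cast h1
      _ = (n:ℝ) ^ 2 := by push_cast; ring
  have hoffr : ∀ r : Fin k, (((Row U r).offDiag).card : ℝ)
      = ((Row U r).card : ℝ) ^ 2 - ((Row U r).card : ℝ) := by
    intro r
    rw [Finset.offDiag_card]
    have h2 : (Row U r).card ≤ (Row U r).card * (Row U r).card := by
      rcases Nat.eq_zero_or_pos (Row U r).card with h | h
      · simp [h]
      · calc (Row U r).card = (Row U r).card * 1 := (mul_one _).symm
          _ ≤ _ := Nat.mul_le_mul_left _ h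
    rw [Nat.cast_sub h2]
    push_cast; ring
  have hCS2 : ((overallCard U : ℝ)) ^ 2 ≤ (k : ℝ) * ∑ r : Fin k, ((Row U r).card : ℝ) ^ 2 := by
    have h := sq_sum_le_card_mul_sum_sq (s := (Finset.univ : Finset (Fin k)))
      (f := fun r => ((Row U r).card : ℝ))
    rw [hA_eq] at h
    simpa using h
  have hlow : (overallCard U : ℝ)^2 / k - (overallCard U : ℝ)
      ≤ ∑ p ∈ (Finset.univ : Finset (Fin n)).offDiag,
          (((Finset.univ.filter (fun i : Fin k => p.1 ∈ Row U i ∧ p.2 ∈ Row U i)).card : ℝ)) := by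
    rw [hid2R]
    have h1 : (∑ r : Fin k, (((Row U r).offDiag).card : ℝ))
        = (∑ r : Fin k, ((Row U r).card : ℝ) ^ 2) - (overallCard U : ℝ) := by
      rw [← hA_eq, ← Finset.sum_sub_distrib]
      exact Finset.sum_congr rfl fun r _ => hoffr r
    rw [h1]
    have h2 : (overallCard U : ℝ) ^ 2 / k ≤ ∑ r : Fin k, ((Row U r).card : ℝ) ^ 2 := by
      rw [div_le_iff₀ hk]; nlinarith [hCS2]
    linarith
  calc (((overallCard U : ℝ))^2 / k - (overallCard U : ℝ))^2
      ≤ (∑ p ∈ (Finset.univ : Finset (Fin n)).offDiag,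
          (((Finset.univ.filter (fun i : Fin k => p.1 ∈ Row U i ∧ p.2 ∈ Row U i)).card : ℝ))) ^ 2 :=
        pow_le_pow_left₀ hX hlow 2
    _ ≤ (((Finset.univ : Finset (Fin n)).offDiag.card : ℝ)) *
        ∑ p ∈ (Finset.univ : Finset (Fin n)).offDiag,
          (((Finset.univ.filter (fun i : Fin k => p.1 ∈ Row U i ∧ p.2 ∈ Row U i)).card : ℝ)) ^ 2 := hCS
    _ ≤ (n:ℝ)^2 * ∑ p ∈ (Finset.univ : Finset (Fin n)).offDiag,
          (((Finset.univ.filter (fun i : Fin k => p.1 ∈ Row U i ∧ p.2 ∈ Row U i)).card : ℝ)) ^ 2 :=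
        mul_le_mul_of_nonneg_right hoffcard
          (Finset.sum_nonneg fun p _ => sq_nonneg _)
    _ = (n:ℝ)^2 * ((∑ r : Fin k, ∑ i : Fin k, ((Row U r ∩ Row U i).offDiag).card : ℕ) : ℝ) :=
        congrArg (fun z => (n:ℝ)^2 * z) hid1R.symm

end Stmt9Aux

open Stmt9Aux

set_option maxHeartbeats 2000000 in
theorem stmt9 : ∃ n₀ : ℕ, ∀ n k : ℕ, n₀ ≤ n → 1 ≤ k → k ≤ n →
    ∀ U : Finset (Fin k → Fin n), U.Nonempty → ReverseFree (U : Set (Fin k → Fin n)) →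
    5 * (n : ℝ) * Real.sqrt k ≤ (overallCard U : ℝ) →
    (∀ r : Fin k, ∀ c : Fin n, (∃ w ∈ U, w r = c) →
      (U.card : ℝ) / (n : ℝ) < ((U.filter (fun w => w r = c)).card : ℝ)) →
    ∃ U' ⊆ U,
      (U.card : ℝ) / (n : ℝ) ≤ (U'.card : ℝ) ∧
      (overallCard U' : ℝ) ≤ (overallCard U : ℝ) -
        2 * n * ((overallCard U : ℝ) / ((n : ℝ) * Real.sqrt k)) ^ 3 / (5 * Real.sqrt k) ∧
      emptiness U + 1 ≤ emptiness U' := by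
  classical
  refine ⟨1, fun n k hn hk1 hkn U hne hRF hbig hlight => ?_⟩
  set K : ℝ := Real.sqrt k with hKdef
  set A : ℝ := (overallCard U : ℝ) with hAdef
  have hkpos : (0:ℝ) < k := by exact_mod_cast hk1
  have hK : (0:ℝ) < K := Real.sqrt_pos.mpr hkpos
  have hKsq : K ^ 2 = k := Real.sq_sqrt (le_of_lt hkpos)
  have hn1 : 1 ≤ n := le_trans hk1 hkn
  have hNpos : (0:ℝ) < n := by exact_mod_cast hn1
  have hknR : (k : ℝ) ≤ n := by exact_mod_cast hkn
  have haleq : A ≤ (n : ℝ) * k := by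
    have h1 : overallCard U ≤ k * n := by
      rw [overallCard]
      calc (Finset.univ.filter _).card ≤ (Finset.univ : Finset (Fin k × Fin n)).card :=
            card_filter_le _ _
        _ = k * n := by simp
    calc A ≤ ((k * n : ℕ) : ℝ) := by rw [hAdef]; exact_mod_cast h1
      _ = (n : ℝ) * k := by push_cast; ring
  have hApos : (0:ℝ) < A := lt_of_lt_of_le (by positivity) hbig
  have hK5 : (5:ℝ) ≤ K := by
    have h1 : 5 * (n:ℝ) * K ≤ (n:ℝ) * K ^ 2 := by rw [hKsq]; linarith [haleq, hbig]
    nlinarith [hK, hNpos]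
  have hA25 : 25 * K ^ 2 ≤ A := by
    have h1 : K ^ 2 ≤ (n:ℝ) := by rw [hKsq]; exact hknR
    nlinarith [hbig, hK, hK5, hNpos]
  set E : ℝ := 4 * (n:ℝ) * (A / ((n:ℝ) * K)) ^ 3 / (5 * K) with hEdef
  have hE0 : 0 ≤ E := by positivity
  -- existence of a good row r
  have hgood : ∃ r : Fin k, 2 ≤ (Row U r).card ∧
      E * ((Row U r).card : ℝ)
        ≤ ((∑ i : Fin k, ((Row U r ∩ Row U i).offDiag).card : ℕ) : ℝ) := by
    by_contra hcon
    push_neg at hcon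
    have hub : ∀ r : Fin k,
        ((∑ i : Fin k, ((Row U r ∩ Row U i).offDiag).card : ℕ) : ℝ)
          ≤ E * ((Row U r).card : ℝ) := by
      intro r
      rcases lt_or_ge (Row U r).card 2 with h | h
      · have hz : ∀ i : Fin k, ((Row U r ∩ Row U i).offDiag).card = 0 := by
          intro i
          rw [Finset.offDiag_card]
          have h2 : (Row U r ∩ Row U i).card ≤ 1 :=
            le_trans (card_le_card inter_subset_left) (by omega)
          have : (Row U r ∩ Row U i).card = 0 ∨ (Row U r ∩ Row U i).card = 1 := by omega
          rcases this with h3 | h3 <;> simp [h3]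
        have hz2 : (∑ i : Fin k, ((Row U r ∩ Row U i).offDiag).card) = 0 := by
          exact Finset.sum_eq_zero fun i _ => hz i
        rw [hz2]
        push_cast
        positivity
      · exact le_of_lt (hcon r h)
    -- summing over r
    have hA_eq : (∑ r : Fin k, ((Row U r).card : ℝ)) = A := by
      rw [hAdef, overallCard_eq_sum U]
      push_cast
      rfl
    have hsum : ((∑ r : Fin k, ∑ i : Fin k, ((Row U r ∩ Row U i).offDiag).card : ℕ) : ℝ)
        ≤ E * A := by
      push_cast
      calc (∑ r : Fin k, ((∑ i : Fin k, (((Row U r ∩ Row U i).offDiag).card : ℝ))))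
          ≤ ∑ r : Fin k, E * ((Row U r).card : ℝ) := by
            refine Finset.sum_le_sum fun r _ => ?_
            have := hub r
            push_cast at this
            exact this
        _ = E * A := by rw [← Finset.mul_sum, hA_eq]
    have hX : 0 ≤ A ^ 2 / (k:ℝ) - A := by
      rw [sub_nonneg, le_div_iff₀ hkpos]
      nlinarith [hApos, hA25, hKsq, hK5]
    have hkey := key_ineq U hk1 (by rw [← hAdef]; exact hX)
    rw [← hAdef] at hkey
    have hfin : (A ^ 2 / (k:ℝ) - A) ^ 2 ≤ (n:ℝ) ^ 2 * (E * A) := by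
      calc (A ^ 2 / (k:ℝ) - A) ^ 2
          ≤ (n:ℝ)^2 * ((∑ r : Fin k, ∑ i : Fin k, ((Row U r ∩ Row U i).offDiag).card : ℕ) : ℝ) :=
            hkey
        _ ≤ (n:ℝ)^2 * (E * A) := by
            apply mul_le_mul_of_nonneg_left hsum
            positivity
    -- numeric contradiction
    have hEAeq : (n:ℝ) ^ 2 * (E * A) = 4 * A ^ 4 / (5 * K ^ 4) := by
      rw [hEdef]
      field_simp
    have hLHS : A ^ 2 / (k:ℝ) - A = A * (A - K ^ 2) / K ^ 2 := by
      rw [← hKsq]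
      field_simp
    rw [hEAeq, hLHS] at hfin
    have hfin2 : 5 * (A * (A - K ^ 2)) ^ 2 ≤ 4 * A ^ 4 := by
      rw [div_pow] at hfin
      have hK4 : (0:ℝ) < K ^ 4 := by positivity
      rw [div_le_div_iff₀ (by positivity) (by positivity)] at hfin
      have : (K ^ 2) ^ 2 = K ^ 4 := by ring
      nlinarith [hfin]
    nlinarith [hfin2, hA25, hApos, hK, sq_nonneg (A - K^2), sq_nonneg K,
      mul_pos hApos hApos, mul_nonneg (sub_nonneg.mpr hA25) hApos.le]
  obtain ⟨r, hs2, hEr⟩ := hgood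
  have hSne : (Row U r).Nonempty := card_pos.mp (lt_of_lt_of_le (by norm_num) hs2)
  obtain ⟨c, hcS, hcmin⟩ := Finset.exists_min_image (Row U r)
    (fun c => overallCard (U.filter fun w => w r = c)) hSne
  refine ⟨U.filter (fun w => w r = c), filter_subset _ _, ?_, ?_, ?_⟩
  · -- cardinality
    have hcS' : ∃ w ∈ U, w r = c := by
      simpa [Row] using hcS
    exact le_of_lt (hlight r c hcS')
  · -- overall card bound
    have hmin : ((Row U r).card) * overallCard (U.filter fun w => w r = c)
        ≤ ∑ c' ∈ Row U r, overallCard (U.filter fun w => w r = c') := by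
      simpa using Finset.card_nsmul_le_sum (Row U r)
        (fun c' => overallCard (U.filter fun w => w r = c'))
        (overallCard (U.filter fun w => w r = c)) (fun c' hc' => hcmin c' hc')
    have htot := total hRF r
    -- cast everything to ℝ
    have hminR : ((Row U r).card : ℝ) * (overallCard (U.filter fun w => w r = c) : ℝ)
        ≤ ((∑ c' ∈ Row U r, overallCard (U.filter fun w => w r = c') : ℕ) : ℝ) := by
      exact_mod_cast hmin
    have htotR : 2 * ((∑ c' ∈ Row U r, overallCard (U.filter fun w => w r = c') : ℕ) : ℝ)
        + ((∑ i : Fin k, ((Row U r ∩ Row U i).offDiag).card : ℕ) : ℝ)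
        ≤ 2 * ((Row U r).card : ℝ) * A := by
      rw [hAdef]
      exact_mod_cast htot
    have hspos : (0:ℝ) < ((Row U r).card : ℝ) := by
      have h0 : 0 < (Row U r).card := lt_of_lt_of_le (by norm_num) hs2
      exact_mod_cast h0
    have hstep : 2 * ((Row U r).card : ℝ) * (overallCard (U.filter fun w => w r = c) : ℝ)
        + E * ((Row U r).card : ℝ) ≤ 2 * ((Row U r).card : ℝ) * A := by
      calc 2 * ((Row U r).card : ℝ) * (overallCard (U.filter fun w => w r = c) : ℝ)
            + E * ((Row U r).card : ℝ)
          ≤ 2 * ((∑ c' ∈ Row U r, overallCard (U.filter fun w => w r = c') : ℕ) : ℝ)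
            + ((∑ i : Fin k, ((Row U r ∩ Row U i).offDiag).card : ℕ) : ℝ) := by
            have := hEr
            nlinarith [hminR]
        _ ≤ 2 * ((Row U r).card : ℝ) * A := htotR
    have hfinal : (overallCard (U.filter fun w => w r = c) : ℝ) ≤ A - E / 2 := by
      nlinarith [hstep, hspos]
    calc (overallCard (U.filter fun w => w r = c) : ℝ) ≤ A - E / 2 := hfinal
      _ = A - 2 * n * (A / ((n:ℝ) * K)) ^ 3 / (5 * K) := by rw [hEdef]; ring
  · exact emptiness_succ U r c hs2
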